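/- (Hopf–Lax preserves agreement with the parabola) Let f*: ℝ → ℝ be continuous with f*(x) ≥ -x² everywhere and f*(x) = -x² for |x| ≥ c. Define h*(t,x) := inf{ ∫_t^1 χ'(r)² dr + f*(χ(1)) : χ ∈ H^1[t,1], χ(t) = x }. Then h*(t,x) ≥ -x²/t for all (t,x) ∈ (0,1]×ℝ, and h*(t,x) = -x²/t whenever |x| ≥ ct. -/
import Mathlib


open Set MeasureTheory

/-- The backward Hopf–Lax evolution of `f` from time `1` to time `t`. -/
noncomputable def hstar (f : ℝ → ℝ) (t x : ℝ) : ℝ :=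
  sInf {v : ℝ | ∃ χ χ' : ℝ → ℝ, χ t = x ∧
    (∀ p ∈ Set.Icc t 1, ∀ q ∈ Set.Icc t 1, χ q - χ p = ∫ r in p..q, χ' r) ∧
    IntervalIntegrable χ' volume t 1 ∧
    IntervalIntegrable (fun r => (χ' r) ^ 2) volume t 1 ∧
    v = (∫ r in t..1, (χ' r) ^ 2) + f (χ 1)}

lemma quad_key (t x y : ℝ) (ht : 0 < t) (ht1 : t < 1) :
    -x ^ 2 / t ≤ (y - x) ^ 2 / (1 - t) - y ^ 2 := by
  have h1t : 0 < 1 - t := by linarith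
  have hkey : (y - x) ^ 2 / (1 - t) - y ^ 2 + x ^ 2 / t
      = (t * y - x) ^ 2 / (t * (1 - t)) := by
    field_simp
    ring
  have hnn : 0 ≤ (t * y - x) ^ 2 / (t * (1 - t)) := by positivity
  rw [neg_div]
  linarith [hkey, hnn]

/-- Backward Hopf–Lax preserves agreement with the parabola: if `f ≥ -x²`
everywhere and `f = -x²` for `|x| ≥ c`, then `h*(t,x) ≥ -x²/t` everywhere and
`h*(t,x) = -x²/t` whenever `|x| ≥ ct`. -/
theorem hopflax_parabola (f : ℝ → ℝ) (hf : Continuous f)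
    (hge : ∀ x : ℝ, -x ^ 2 ≤ f x) (c : ℝ) (hout : ∀ x : ℝ, c ≤ |x| → f x = -x ^ 2) :
    ∀ t ∈ Ioc (0 : ℝ) 1, ∀ x : ℝ,
      -x ^ 2 / t ≤ hstar f t x ∧ (c * t ≤ |x| → hstar f t x = -x ^ 2 / t) := by
  intro t ht x
  obtain ⟨ht0, ht1⟩ := ht
  set S := {v : ℝ | ∃ χ χ' : ℝ → ℝ, χ t = x ∧
    (∀ p ∈ Set.Icc t 1, ∀ q ∈ Set.Icc t 1, χ q - χ p = ∫ r in p..q, χ' r) ∧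
    IntervalIntegrable χ' volume t 1 ∧
    IntervalIntegrable (fun r => (χ' r) ^ 2) volume t 1 ∧
    v = (∫ r in t..1, (χ' r) ^ 2) + f (χ 1)} with hS
  -- constant path gives nonemptiness
  have hconst : ((∫ r in t..1, (0:ℝ) ^ 2) + f x) ∈ S := by
    refine ⟨fun _ => x, fun _ => 0, rfl, ?_, ?_, ?_, rfl⟩
    · intro p hp q hq; simp
    · exact intervalIntegrable_const
    · simpa using (intervalIntegrable_const : IntervalIntegrable (fun _ => (0:ℝ)) volume t 1)
  have hne : S.Nonempty := ⟨_, hconst⟩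
  -- lower bound for each element
  have hlow : ∀ v ∈ S, -x ^ 2 / t ≤ v := by
    rintro v ⟨χ, χ', hχt, hFTC, hint1, hint2, rfl⟩
    rcases eq_or_lt_of_le ht1 with hteq | htlt
    · -- t = 1
      have h0 : t = 1 := hteq
      subst h0
      rw [intervalIntegral.integral_same, hχt]
      have := hge x
      simp only [div_one]
      linarith
    · set y := χ 1 with hy
      have h1t : 0 < 1 - t := by linarith
      set a := (y - x) / (1 - t) with ha
      have hyx : y - x = ∫ r in t..1, χ' r := by
        have := hFTC t ⟨le_refl t, ht1⟩ 1 ⟨ht1, le_refl 1⟩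
        rwa [hχt] at this
      -- expand the square
      have hfun : (fun r => (χ' r - a) ^ 2)
          = fun r => ((χ' r) ^ 2 - (2 * a) * χ' r) + a ^ 2 := by
        funext r; ring
      have hint3 : IntervalIntegrable (fun r => (χ' r) ^ 2 - (2 * a) * χ' r) volume t 1 :=
        hint2.sub (hint1.const_mul _)
      have hexp : (∫ r in t..1, (χ' r - a) ^ 2)
          = (∫ r in t..1, (χ' r) ^ 2) - 2 * a * (y - x) + (1 - t) * a ^ 2 := by
        rw [hfun, intervalIntegral.integral_add hint3 intervalIntegrable_const,
          intervalIntegral.integral_sub hint2 (hint1.const_mul _),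
          intervalIntegral.integral_const_mul, ← hyx, intervalIntegral.integral_const]
        simp [smul_eq_mul]
      have hnn : 0 ≤ ∫ r in t..1, (χ' r - a) ^ 2 :=
        intervalIntegral.integral_nonneg (le_of_lt (by linarith)) (fun u _ => sq_nonneg _)
      have hcs : (y - x) ^ 2 / (1 - t) ≤ ∫ r in t..1, (χ' r) ^ 2 := by
        have hval : 2 * a * (y - x) - (1 - t) * a ^ 2 = (y - x) ^ 2 / (1 - t) := by
          rw [ha]; field_simp; ring
        linarith [hexp, hnn]
      have := quad_key t x y ht0 htlt
      have hf2 := hge y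
      linarith
  have hbdd : BddBelow S := ⟨-x ^ 2 / t, hlow⟩
  constructor
  · exact le_csInf hne hlow
  · intro hcx
    -- the linear path to x/t
    have hmem : (-x ^ 2 / t) ∈ S := by
      refine ⟨fun r => x / t * r, fun _ => x / t, ?_, ?_, intervalIntegrable_const,
        intervalIntegrable_const, ?_⟩
      · field_simp
      · intro p hp q hq
        rw [intervalIntegral.integral_const]
        simp [smul_eq_mul]; ring
      · have habs : c ≤ |x / t| := by
          rw [abs_div, abs_of_pos ht0, le_div_iff₀ ht0]
          linarith [hcx]
        simp only [mul_one]
        rw [hout _ habs, intervalIntegral.integral_const]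
        simp only [smul_eq_mul]
        field_simp
        ring
    exact le_antisymm (csInf_le hbdd hmem) (le_csInf hne hlow)
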